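/- For every real number p ≥ 3 and every real t with |t| ≤ 1, one has |1+t|^p ≥ 1 + |t|^p + p·|t|^(p-2)·t + p·t. -/

import Mathlib

open Real Set

/-- Superadditivity of `x ^ r` for `r ≥ 1` on nonnegative reals. -/
lemma superadd_rpow {a b r : ℝ} (ha : 0 ≤ a) (hb : 0 ≤ b) (hr : 1 ≤ r) :
    a ^ r + b ^ r ≤ (a + b) ^ r := by
  rcases eq_or_lt_of_le (by linarith : (0:ℝ) ≤ a + b) with h | h
  · have ha0 : a = 0 := by linarith
    have hb0 : b = 0 := by linarith
    simp [ha0, hb0, Real.zero_rpow (by linarith : r ≠ 0)]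
  · have key : ∀ x : ℝ, 0 ≤ x → x ≤ a + b → x ^ r ≤ (a + b) ^ (r - 1) * x := by
      intro x hx hxab
      have h1 : x ^ r = x ^ (r - 1) * x := by
        rw [← Real.rpow_add_one' (by positivity) (by linarith)]
        ring_nf
      rw [h1]
      exact mul_le_mul_of_nonneg_right
        (Real.rpow_le_rpow hx hxab (by linarith)) hx
    have hab : (a + b) ^ (r - 1) * (a + b) = (a + b) ^ r := by
      rw [← Real.rpow_add_one' (by positivity) (by linarith)]
      ring_nf
    calc a ^ r + b ^ r ≤ (a + b) ^ (r - 1) * a + (a + b) ^ (r - 1) * b :=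
          add_le_add (key a ha (by linarith)) (key b hb (by linarith))
      _ = (a + b) ^ (r - 1) * (a + b) := by ring
      _ = (a + b) ^ r := hab

/-- For `q ≥ 2` and `x, y ≥ 0`: `(x+y)^q ≥ x^q + q x^(q-1) y + y^q`. -/
lemma lemA {q x : ℝ} (hq : 2 ≤ q) (hx : 0 ≤ x) :
    ∀ y : ℝ, 0 ≤ y → x ^ q + q * x ^ (q - 1) * y + y ^ q ≤ (x + y) ^ q := by
  set F : ℝ → ℝ := fun y => (x + y) ^ q - (x ^ q + q * x ^ (q - 1) * y + y ^ q) with hF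
  have hcont : Continuous F := by
    apply Continuous.sub
    · exact (continuous_const.add continuous_id).rpow_const (fun y => Or.inr (by linarith))
    · exact (continuous_const.add (continuous_const.mul continuous_id)).add
        (continuous_id.rpow_const (fun y => Or.inr (by linarith)))
  have hderiv : ∀ y : ℝ, 0 < y → HasDerivAt F
      (q * (x + y) ^ (q - 1) - (q * x ^ (q - 1) + q * y ^ (q - 1))) y := by
    intro y hy
    have h1 : HasDerivAt (fun y : ℝ => (x + y) ^ q) (q * (x + y) ^ (q - 1)) y := by
      have := (HasDerivAt.rpow_const (f := fun y : ℝ => x + y) (f' := 1)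
        ((hasDerivAt_id y).const_add x) (p := q) (Or.inr (by linarith)))
      simpa using this
    have h2 : HasDerivAt (fun y : ℝ => y ^ q) (q * y ^ (q - 1)) y :=
      Real.hasDerivAt_rpow_const (Or.inl (ne_of_gt hy))
    have h3 : HasDerivAt (fun y : ℝ => x ^ q + q * x ^ (q - 1) * y + y ^ q)
        (q * x ^ (q - 1) + q * y ^ (q - 1)) y := by
      have := ((hasDerivAt_id y).const_mul (q * x ^ (q - 1))).const_add (x ^ q)
      simpa [Pi.add_def] using this.add h2
    exact h1.sub h3
  have hmono : MonotoneOn F (Ici 0) := by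
    apply monotoneOn_of_deriv_nonneg (convex_Ici 0) hcont.continuousOn
    · intro y hy
      rw [interior_Ici] at hy
      exact ((hderiv y hy).differentiableAt).differentiableWithinAt
    · intro y hy
      rw [interior_Ici] at hy
      rw [(hderiv y hy).deriv]
      have hsup : x ^ (q - 1) + y ^ (q - 1) ≤ (x + y) ^ (q - 1) :=
        superadd_rpow hx (le_of_lt hy) (by linarith)
      have hq0 : 0 < q := by linarith
      nlinarith [hsup]
  have hF0 : F 0 = 0 := by
    simp [hF, Real.zero_rpow (by linarith : q ≠ 0)]
  intro y hy
  have := hmono (self_mem_Ici) hy hy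
  rw [hF0] at this
  simp only [hF] at this
  linarith

/-- For `p ≥ 3` and `t ≥ 0`: `(1+t)^p ≥ 1 + t^p + p t^(p-1) + p t`. -/
lemma lemB {p : ℝ} (hp : 3 ≤ p) :
    ∀ t : ℝ, 0 ≤ t → 1 + t ^ p + p * t ^ (p - 1) + p * t ≤ (1 + t) ^ p := by
  set F : ℝ → ℝ := fun t => (1 + t) ^ p - (1 + t ^ p + p * t ^ (p - 1) + p * t) with hF
  have hcont : Continuous F := by
    apply Continuous.sub
    · exact (continuous_const.add continuous_id).rpow_const (fun y => Or.inr (by linarith))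
    · apply Continuous.add
      apply Continuous.add
      apply Continuous.add continuous_const
      · exact continuous_id.rpow_const (fun y => Or.inr (by linarith))
      · exact continuous_const.mul (continuous_id.rpow_const (fun y => Or.inr (by linarith)))
      · exact continuous_const.mul continuous_id
  have hderiv : ∀ t : ℝ, 0 < t → HasDerivAt F
      (p * (1 + t) ^ (p - 1) - (p * t ^ (p - 1) + p * ((p-1) * t ^ (p - 2)) + p)) t := by
    intro t ht
    have h1 : HasDerivAt (fun t : ℝ => (1 + t) ^ p) (p * (1 + t) ^ (p - 1)) t := by
      have := (HasDerivAt.rpow_const (f := fun t : ℝ => 1 + t) (f' := 1)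
        ((hasDerivAt_id t).const_add 1) (p := p) (Or.inr (by linarith)))
      simpa using this
    have h2 : HasDerivAt (fun t : ℝ => t ^ p) (p * t ^ (p - 1)) t :=
      Real.hasDerivAt_rpow_const (Or.inl (ne_of_gt ht))
    have h3 : HasDerivAt (fun t : ℝ => t ^ (p - 1)) ((p - 1) * t ^ (p - 2)) t := by
      have := Real.hasDerivAt_rpow_const (x := t) (p := p - 1) (Or.inl (ne_of_gt ht))
      convert this using 2
      ring
    have h4 : HasDerivAt (fun t : ℝ => 1 + t ^ p + p * t ^ (p - 1) + p * t)
        (p * t ^ (p - 1) + p * ((p-1) * t ^ (p - 2)) + p) t := by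
      have := ((h2.const_add 1).add (h3.const_mul p)).add
        (((hasDerivAt_id t).const_mul p))
      simpa [Pi.add_def] using this
    exact h1.sub h4
  have hmono : MonotoneOn F (Ici 0) := by
    apply monotoneOn_of_deriv_nonneg (convex_Ici 0) hcont.continuousOn
    · intro t ht
      rw [interior_Ici] at ht
      exact ((hderiv t ht).differentiableAt).differentiableWithinAt
    · intro t ht
      rw [interior_Ici] at ht
      rw [(hderiv t ht).deriv]
      have key := lemA (q := p - 1) (x := t) (by linarith) (le_of_lt ht) 1 zero_le_one
      rw [Real.one_rpow] at key
      have h1 : p - 1 - 1 = p - 2 := by ring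
      rw [h1] at key
      have hcomm : t + 1 = 1 + t := by ring
      rw [hcomm] at key
      have hp0 : 0 < p := by linarith
      nlinarith [key]
  have hF0 : F 0 = 0 := by
    simp [hF, Real.zero_rpow (by linarith : p ≠ 0),
      Real.zero_rpow (by linarith : p - 1 ≠ 0)]
  intro t ht
  have := hmono (self_mem_Ici) ht ht
  rw [hF0] at this
  simp only [hF] at this
  linarith

/-- For `p ≥ 3` and `s ∈ [0,1]`: `(1-s)^p ≥ 1 + s^p - p s^(p-1) - p s`. -/
lemma lemC {p : ℝ} (hp : 3 ≤ p) :
    ∀ s : ℝ, 0 ≤ s → s ≤ 1 → 1 + s ^ p - p * s ^ (p - 1) - p * s ≤ (1 - s) ^ p := by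
  set F : ℝ → ℝ := fun s => (1 - s) ^ p - (1 + s ^ p - p * s ^ (p - 1) - p * s) with hF
  have hcont : Continuous F := by
    apply Continuous.sub
    · exact (continuous_const.sub continuous_id).rpow_const (fun y => Or.inr (by linarith))
    · apply Continuous.sub
      apply Continuous.sub
      apply Continuous.add continuous_const
      · exact continuous_id.rpow_const (fun y => Or.inr (by linarith))
      · exact continuous_const.mul (continuous_id.rpow_const (fun y => Or.inr (by linarith)))
      · exact continuous_const.mul continuous_id
  have hderiv : ∀ s : ℝ, 0 < s → s < 1 → HasDerivAt F
      (-(p * (1 - s) ^ (p - 1)) - (p * s ^ (p - 1) - p * ((p-1) * s ^ (p - 2)) - p)) s := by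
    intro s hs hs1
    have h1 : HasDerivAt (fun s : ℝ => (1 - s) ^ p) (-(p * (1 - s) ^ (p - 1))) s := by
      have := (HasDerivAt.rpow_const (f := fun s : ℝ => 1 - s) (f' := -1)
        ((hasDerivAt_id s).const_sub 1) (p := p) (Or.inl (ne_of_gt (show (0:ℝ) < 1 - s by linarith))))
      convert this using 1
      ring
    have h2 : HasDerivAt (fun s : ℝ => s ^ p) (p * s ^ (p - 1)) s :=
      Real.hasDerivAt_rpow_const (Or.inl (ne_of_gt hs))
    have h3 : HasDerivAt (fun s : ℝ => s ^ (p - 1)) ((p - 1) * s ^ (p - 2)) s := by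
      have := Real.hasDerivAt_rpow_const (x := s) (p := p - 1) (Or.inl (ne_of_gt hs))
      convert this using 2
      ring
    have h4 : HasDerivAt (fun s : ℝ => 1 + s ^ p - p * s ^ (p - 1) - p * s)
        (p * s ^ (p - 1) - p * ((p-1) * s ^ (p - 2)) - p) s := by
      have := ((h2.const_add 1).sub (h3.const_mul p)).sub
        (((hasDerivAt_id s).const_mul p))
      simpa [Pi.sub_def] using this
    exact h1.sub h4
  have hmono : MonotoneOn F (Icc 0 1) := by
    apply monotoneOn_of_deriv_nonneg (convex_Icc 0 1) hcont.continuousOn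
    · intro s hs
      rw [interior_Icc] at hs
      exact ((hderiv s hs.1 hs.2).differentiableAt).differentiableWithinAt
    · intro s hs
      rw [interior_Icc] at hs
      obtain ⟨hs0, hs1⟩ := hs
      rw [(hderiv s hs0 hs1).deriv]
      -- need: (1-s)^(p-1) + s^(p-1) ≤ 1 + (p-1) s^(p-2)
      have k1 : (1 - s) ^ (p - 1) ≤ 1 - s := by
        have := Real.rpow_le_rpow_of_exponent_ge (x := 1 - s) (y := p - 1) (z := 1)
          (by linarith) (by linarith) (by linarith)
        rwa [Real.rpow_one] at this
      have k2 : s ^ (p - 1) ≤ s ^ (p - 2) :=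
        Real.rpow_le_rpow_of_exponent_ge hs0 (le_of_lt hs1) (by linarith)
      have k3 : 0 ≤ s ^ (p - 2) := Real.rpow_nonneg (le_of_lt hs0) _
      have hp0 : 0 < p := by linarith
      have A : p * (1 - s) ^ (p - 1) ≤ p * (1 - s) :=
        mul_le_mul_of_nonneg_left k1 hp0.le
      have B : p * s ^ (p - 1) ≤ p * s ^ (p - 2) :=
        mul_le_mul_of_nonneg_left k2 hp0.le
      have C : 0 ≤ p * (p - 2) * s ^ (p - 2) :=
        mul_nonneg (by nlinarith) k3
      nlinarith [mul_pos hp0 hs0]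
  have hF0 : F 0 = 0 := by
    simp [hF, Real.zero_rpow (by linarith : p ≠ 0),
      Real.zero_rpow (by linarith : p - 1 ≠ 0)]
  intro s hs0 hs1
  have := hmono (by constructor <;> norm_num) (by exact ⟨hs0, hs1⟩) hs0
  rw [hF0] at this
  simp only [hF] at this
  linarith

theorem stmt0 (p t : ℝ) (hp : 3 ≤ p) (ht : |t| ≤ 1) :
    |1 + t| ^ p ≥ 1 + |t| ^ p + p * (Real.sign t * |t| ^ (p - 1)) + p * t := by
  rcases lt_trichotomy t 0 with h | h | h
  · -- t < 0
    set s := -t with hs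
    have hs0 : 0 < s := by simp [hs]; linarith
    have hs1 : s ≤ 1 := by
      have := abs_le.mp ht
      simp [hs]; linarith
    have habs : |t| = s := by rw [abs_of_neg h]
    have hsign : Real.sign t = -1 := Real.sign_of_neg h
    have habs2 : |1 + t| = 1 - s := by
      rw [abs_of_nonneg (by simp [hs] at *; linarith)]
      simp [hs]
    rw [habs, hsign, habs2]
    have := lemC hp s (le_of_lt hs0) hs1
    have hts : t = -s := by simp [hs]
    rw [hts]
    linarith
  · simp [h, Real.sign_zero, Real.zero_rpow (by linarith : p ≠ 0), Real.one_rpow]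
  · -- t > 0
    have habs : |t| = t := abs_of_pos h
    have hsign : Real.sign t = 1 := Real.sign_of_pos h
    have habs2 : |1 + t| = 1 + t := abs_of_pos (by linarith)
    rw [habs, hsign, habs2, one_mul]
    exact lemB hp t (le_of_lt h)
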